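/- The kernel of the operator D̂ on the maximal domain in ℓ² is trivial: if f̂ = (f̂_n) with f̂_n : Z/p^nZ → ℂ satisfies f̂_n(k) = f̂_{n+1}(pk) for all n, k, and Σ_n Σ_{0≤k<p^n} |f̂_n(k)|² < ∞, then f̂ ≡ 0. -/

import Mathlib

/-- The kernel of the operator `D̂` on its maximal domain in `ℓ²` is trivial. -/
theorem stmt7 (p : ℕ) (hp : p.Prime) (f : ℕ → ℕ → ℂ)
    (hker : ∀ n k, k < p ^ n → f n k = f (n + 1) (p * k))
    (hsum : Summable (fun x : Σ n : ℕ, Fin (p ^ n) => ‖f x.1 (x.2 : ℕ)‖ ^ 2)) :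
    ∀ n k, k < p ^ n → f n k = 0 := by
  intro n k hk
  have hlt : ∀ m, p ^ m * k < p ^ (n + m) := by
    intro m
    calc p ^ m * k < p ^ m * p ^ n :=
          (Nat.mul_lt_mul_left (pow_pos hp.pos m)).mpr hk
      _ = p ^ (n + m) := by rw [← pow_add, Nat.add_comm]
  have heq : ∀ m, f (n + m) (p ^ m * k) = f n k := by
    intro m
    induction m with
    | zero => simp
    | succ m ih =>
      have h1 : p ^ (m + 1) * k = p * (p ^ m * k) := by ring
      rw [← Nat.add_assoc, h1, ← hker (n + m) (p ^ m * k) (hlt m), ih]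
  set g : ℕ → Σ n : ℕ, Fin (p ^ n) := fun m => ⟨n + m, ⟨p ^ m * k, hlt m⟩⟩ with hg
  have hginj : Function.Injective g := by
    intro a b hab
    have : n + a = n + b := congrArg Sigma.fst hab
    omega
  have hs : Summable (fun m : ℕ => ‖f n k‖ ^ 2) := by
    have h := hsum.comp_injective hginj
    have he : (fun x : Σ n : ℕ, Fin (p ^ n) => ‖f x.1 (x.2 : ℕ)‖ ^ 2) ∘ g
        = fun m : ℕ => ‖f n k‖ ^ 2 := by
      funext m
      simp [g, heq m]
    rwa [he] at h
  have h0 : ‖f n k‖ ^ 2 = 0 := by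
    have ht := hs.tendsto_atTop_zero
    exact tendsto_nhds_unique tendsto_const_nhds ht
  have : ‖f n k‖ = 0 := by
    nlinarith [norm_nonneg (f n k)]
  simpa using this
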